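/- Let θ < 0 and define I_θ(x,y) = θ(1 - x² + θy)/2 + (1+x²)²/(8y) for y > 0 and I_θ(x,y) = +∞ for y ≤ 0, and f(x,y) = (x²-1)/(2y). Then for every z ∈ ℝ, inf{ I_θ(x,y) : y > 0, f(x,y) = z } equals -(z-θ)²/(4z) if z ≤ θ/3, and equals 2z - θ if z ≥ θ/3. -/

import Mathlib

open Real

theorem contraction_rate_function_stable
    (θ : ℝ) (hθ : θ < 0) (z : ℝ) :
    (z ≤ θ / 3 →
      sInf {v : ℝ | ∃ x y : ℝ, 0 < y ∧ (x ^ 2 - 1) / (2 * y) = z ∧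
        v = θ * (1 - x ^ 2 + θ * y) / 2 + (1 + x ^ 2) ^ 2 / (8 * y)}
        = -(z - θ) ^ 2 / (4 * z)) ∧
    (θ / 3 ≤ z →
      sInf {v : ℝ | ∃ x y : ℝ, 0 < y ∧ (x ^ 2 - 1) / (2 * y) = z ∧
        v = θ * (1 - x ^ 2 + θ * y) / 2 + (1 + x ^ 2) ^ 2 / (8 * y)}
        = 2 * z - θ) := by
  constructor
  · intro hz
    have hz0 : z < 0 := by linarith
    have hzne : z ≠ 0 := ne_of_lt hz0
    -- membership: x = 0, y = -1/(2z)
    have hmem : -(z - θ) ^ 2 / (4 * z) ∈ {v : ℝ | ∃ x y : ℝ, 0 < y ∧ (x ^ 2 - 1) / (2 * y) = z ∧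
        v = θ * (1 - x ^ 2 + θ * y) / 2 + (1 + x ^ 2) ^ 2 / (8 * y)} := by
      refine ⟨0, -1/(2*z), div_pos_of_neg_of_neg (by norm_num) (by linarith), ?_, ?_⟩
      · field_simp
        norm_num
      · field_simp
        ring
    have hlb : ∀ v ∈ {v : ℝ | ∃ x y : ℝ, 0 < y ∧ (x ^ 2 - 1) / (2 * y) = z ∧
        v = θ * (1 - x ^ 2 + θ * y) / 2 + (1 + x ^ 2) ^ 2 / (8 * y)},
        -(z - θ) ^ 2 / (4 * z) ≤ v := by
      rintro v ⟨x, y, hy, hxy, rfl⟩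
      have hyne : y ≠ 0 := ne_of_gt hy
      have hx2 : x ^ 2 = 1 + 2 * y * z := by
        field_simp at hxy; linarith
      have h1 : 0 ≤ 1 + 2 * y * z := by
        rw [← hx2]; positivity
      have hv : θ * (1 - x ^ 2 + θ * y) / 2 + (1 + x ^ 2) ^ 2 / (8 * y)
          = (z - θ) ^ 2 * y / 2 + 1 / (2 * y) + z := by
        rw [hx2]; field_simp; ring
      rw [hv]
      have hfac : (θ - z) ^ 2 * y + 2 * z ≤ 0 := by
        nlinarith [mul_nonneg (mul_nonneg hy.le (by linarith : (0:ℝ) ≤ θ - 3*z))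
            (by linarith : (0:ℝ) ≤ -(θ + z)),
          mul_nonneg h1 (by linarith : (0:ℝ) ≤ -(2*z))]
      have h4 : (1 + 2 * z * y) * ((θ - z) ^ 2 * y + 2 * z) ≤ 0 := by
        nlinarith [mul_nonneg h1 (neg_nonneg.mpr hfac)]
      have hkey : ((z - θ) ^ 2 * y / 2 + 1 / (2 * y) + z + (z - θ) ^ 2 / (4 * z)) * (4 * z * y)
          = (1 + 2 * z * y) * ((θ - z) ^ 2 * y + 2 * z) := by
        field_simp
        ring
      have hszy : 4 * z * y < 0 := by nlinarith [mul_pos hy (show (0:ℝ) < -z by linarith)]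
      have hE : 0 ≤ (z - θ) ^ 2 * y / 2 + 1 / (2 * y) + z + (z - θ) ^ 2 / (4 * z) := by
        by_contra h
        push_neg at h
        nlinarith [mul_pos_of_neg_of_neg h hszy, hkey, h4]
      rw [neg_div]
      linarith
    exact le_antisymm (csInf_le ⟨_, hlb⟩ hmem) (le_csInf ⟨_, hmem⟩ hlb)
  · intro hz
    have hθz : θ < z := by linarith
    have hzθne : z - θ ≠ 0 := by intro h; linarith
    have hx2 : (Real.sqrt ((3*z - θ)/(z - θ))) ^ 2 = (3*z - θ)/(z - θ) :=
      Real.sq_sqrt (div_nonneg (by linarith) (by linarith))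
    have hmem : 2 * z - θ ∈ {v : ℝ | ∃ x y : ℝ, 0 < y ∧ (x ^ 2 - 1) / (2 * y) = z ∧
        v = θ * (1 - x ^ 2 + θ * y) / 2 + (1 + x ^ 2) ^ 2 / (8 * y)} := by
      refine ⟨Real.sqrt ((3*z - θ)/(z - θ)), 1/(z - θ), div_pos one_pos (by linarith), ?_, ?_⟩
      · rw [hx2]; field_simp; ring
      · rw [hx2]; field_simp; ring
    have hlb : ∀ v ∈ {v : ℝ | ∃ x y : ℝ, 0 < y ∧ (x ^ 2 - 1) / (2 * y) = z ∧
        v = θ * (1 - x ^ 2 + θ * y) / 2 + (1 + x ^ 2) ^ 2 / (8 * y)},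
        2 * z - θ ≤ v := by
      rintro v ⟨x, y, hy, hxy, rfl⟩
      have hyne : y ≠ 0 := ne_of_gt hy
      have hx2' : x ^ 2 = 1 + 2 * y * z := by
        field_simp at hxy; linarith
      have hv : θ * (1 - x ^ 2 + θ * y) / 2 + (1 + x ^ 2) ^ 2 / (8 * y)
          = (z - θ) ^ 2 * y / 2 + 1 / (2 * y) + z := by
        rw [hx2']; field_simp; ring
      rw [hv]
      have hkey : ((z - θ) ^ 2 * y / 2 + 1 / (2 * y) + z - (2 * z - θ)) * (2 * y)
          = ((z - θ) * y - 1) ^ 2 := by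
        field_simp
        ring
      nlinarith [hkey, sq_nonneg ((z - θ) * y - 1), hy]
    exact le_antisymm (csInf_le ⟨_, hlb⟩ hmem) (le_csInf ⟨_, hmem⟩ hlb)
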